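/- The number of permutations in S_n avoiding all three patterns 123, 132, and 3241 equals f_{n+2} − 1 for all n ≥ 1, where f_n is the n-th Fibonacci number (f_1 = f_2 = 1). -/

import Mathlib

/-- `σ` contains the pattern `p` (given as a sequence of values). -/
def PermContains {n k : ℕ} (σ : Equiv.Perm (Fin n)) (p : Fin k → Fin k) : Prop :=
  ∃ f : Fin k → Fin n, StrictMono f ∧ ∀ i j : Fin k, p i < p j ↔ σ (f i) < σ (f j)

/-- `σ` avoids the pattern `p`. -/
def PermAvoids {n k : ℕ} (σ : Equiv.Perm (Fin n)) (p : Fin k → Fin k) : Prop :=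
  ¬ PermContains σ p

def p123 : Fin 3 → Fin 3 := ![0, 1, 2]
def p132 : Fin 3 → Fin 3 := ![0, 2, 1]
def p213 : Fin 3 → Fin 3 := ![1, 0, 2]
def p231 : Fin 3 → Fin 3 := ![1, 2, 0]
def p312 : Fin 3 → Fin 3 := ![2, 0, 1]
def p321 : Fin 3 → Fin 3 := ![2, 1, 0]

/-- the list `a, a-1, ..., b` (empty if `b > a`). -/
def descList (a b : ℕ) : List ℕ := (List.range (a + 1 - b)).map (fun j => a - j)

/-- the list `a, a+1, ..., b` (empty if `b > a`). -/
def ascList (a b : ℕ) : List ℕ := (List.range (b + 1 - a)).map (fun j => a + j)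

/- ===== auxiliary development ===== -/

def gl (s : List ℕ) : ℕ → ℕ := fun i => s.getD i 0

def Has123 (g : ℕ → ℕ) (n : ℕ) : Prop :=
  ∃ i j k, i < j ∧ j < k ∧ k < n ∧ g i < g j ∧ g j < g k

def Has132 (g : ℕ → ℕ) (n : ℕ) : Prop :=
  ∃ i j k, i < j ∧ j < k ∧ k < n ∧ g i < g k ∧ g k < g j

def Has3241 (g : ℕ → ℕ) (n : ℕ) : Prop :=
  ∃ i j k l, i < j ∧ j < k ∧ k < l ∧ l < n ∧ g l < g j ∧ g j < g i ∧ g i < g k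

/-- Good lists: avoid all three patterns. -/
def GoodL (s : List ℕ) : Prop :=
  ¬ Has123 (gl s) s.length ∧ ¬ Has132 (gl s) s.length ∧ ¬ Has3241 (gl s) s.length

lemma descList_zero (a : ℕ) : descList a 0 = (List.range (a+1)).reverse := by
  apply List.ext_getElem
  · simp [descList]
  · intro i h1 h2
    simp only [descList, List.getElem_map, List.getElem_range, List.getElem_reverse,
      List.length_range]
    simp [descList] at h1
    omega

lemma descList_length (a : ℕ) : (descList a 0).length = a + 1 := by
  simp [descList]

lemma descList_getD (a i : ℕ) (h : i ≤ a) : gl (descList a 0) i = a - i := by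
  have hl : i < (descList a 0).length := by rw [descList_length]; omega
  rw [gl, List.getD_eq_getElem _ _ hl]
  simp [descList]
def AvL : ℕ → Finset (List ℕ)
  | 0 => ∅
  | 1 => {[0]}
  | (n+2) => ((AvL (n+1)).image (fun t => (n+1) :: t)) ∪
      ((AvL n).image (fun t => n :: (n+1) :: t)) ∪ {descList n 0 ++ [n+1]}

lemma avl_perm : ∀ n, ∀ s ∈ AvL n, s.Perm (List.range n) := by
  intro n
  induction n using Nat.strong_induction_on with
  | _ n ih =>
    match n with
    | 0 => simp [AvL]
    | 1 => intro s hs; simp [AvL] at hs; simp [hs, List.range_succ]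
    | (n+2) =>
      intro s hs
      simp only [AvL, Finset.mem_union, Finset.mem_image, Finset.mem_singleton] at hs
      have hr : List.range (n+2) = List.range (n+1) ++ [n+1] := by rw [List.range_succ]
      have hr2 : List.range (n+1) = List.range n ++ [n] := by rw [List.range_succ]
      have key : ((n+1) :: List.range (n+1)).Perm (List.range (n+2)) := by
        rw [hr]; exact (List.perm_append_singleton _ _).symm
      rcases hs with (⟨t, ht, rfl⟩ | ⟨t, ht, rfl⟩) | rfl
      · exact ((ih (n+1) (by omega) t ht).cons _).trans key
      · refine (((ih n (by omega) t ht).cons _).cons _).trans ?_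
        have key2 : (n :: List.range n).Perm (List.range (n+1)) := by
          rw [hr2]; exact (List.perm_append_singleton _ _).symm
        exact ((List.Perm.swap (n+1) n _).trans (key2.cons _)).trans key
      · rw [hr, descList_zero]
        exact (List.reverse_perm _).append_right _

lemma avl_lt : ∀ n, ∀ s ∈ AvL n, ∀ x ∈ s, x < n := by
  intro n s hs x hx
  have := (avl_perm n s hs).mem_iff.mp hx
  simpa using this

lemma avl_length (n : ℕ) (s : List ℕ) (hs : s ∈ AvL n) : s.length = n := by
  simpa using (avl_perm n s hs).length_eq
lemma gl_cons_zero (a : ℕ) (t : List ℕ) : gl (a :: t) 0 = a := rfl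

lemma gl_cons_succ (a : ℕ) (t : List ℕ) (i : ℕ) : gl (a :: t) (i+1) = gl t i := rfl

lemma gl_append (l l' : List ℕ) (i : ℕ) (h : i < l.length) : gl (l ++ l') i = gl l i := by
  rw [gl, gl, List.getD_eq_getElem _ _ (by simp; omega), List.getD_eq_getElem _ _ h]
  exact List.getElem_append_left h

lemma gl_mem (s : List ℕ) (i : ℕ) (h : i < s.length) : gl s i ∈ s := by
  rw [gl, List.getD_eq_getElem _ _ h]; exact List.getElem_mem h

lemma avl_card : ∀ n, 1 ≤ n → (AvL n).card = Nat.fib (n+2) - 1 := by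
  intro n
  induction n using Nat.strong_induction_on with
  | _ n ih =>
    match n with
    | 0 => exact fun h => absurd h (by omega)
    | 1 => intro _; rfl
    | 2 => intro _; rfl
    | (n+3) =>
      intro _
      have hA : ∀ s ∈ (AvL (n+2)).image (fun t => (n+2) :: t), gl s 0 = n+2 := by
        intro s hs; simp only [Finset.mem_image] at hs
        obtain ⟨t, _, rfl⟩ := hs; rfl
      have hB : ∀ s ∈ (AvL (n+1)).image (fun t => (n+1) :: (n+2) :: t),
          gl s 0 = n+1 ∧ gl s 1 = n+2 := by
        intro s hs; simp only [Finset.mem_image] at hs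
        obtain ⟨t, _, rfl⟩ := hs; exact ⟨rfl, rfl⟩
      have hC0 : gl (descList (n+1) 0 ++ [n+2]) 0 = n+1 := by
        rw [gl_append _ _ 0 (by rw [descList_length]; omega), descList_getD _ _ (by omega)]; omega
      have hC1 : gl (descList (n+1) 0 ++ [n+2]) 1 = n := by
        rw [gl_append _ _ 1 (by rw [descList_length]; omega), descList_getD _ _ (by omega)]; omega
      have hdAB : Disjoint ((AvL (n+2)).image (fun t => (n+2) :: t))
          ((AvL (n+1)).image (fun t => (n+1) :: (n+2) :: t)) := by
        rw [Finset.disjoint_left]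
        intro s h1 h2
        have := hA s h1; have := (hB s h2).1; omega
      have hdC : Disjoint (((AvL (n+2)).image (fun t => (n+2) :: t)) ∪
          ((AvL (n+1)).image (fun t => (n+1) :: (n+2) :: t)))
          ({descList (n+1) 0 ++ [n+2]} : Finset (List ℕ)) := by
        rw [Finset.disjoint_right]
        intro s hs hu
        simp only [Finset.mem_singleton] at hs
        subst hs
        rcases Finset.mem_union.mp hu with h1 | h2
        · have := hA _ h1; omega
        · have := (hB _ h2).2; omega
      have e1 : (AvL (n+3)).card = ((AvL (n+2)).image (fun t => (n+2) :: t)).card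
          + ((AvL (n+1)).image (fun t => (n+1) :: (n+2) :: t)).card + 1 := by
        show ((((AvL (n+2)).image (fun t => (n+2) :: t)) ∪
          ((AvL (n+1)).image (fun t => (n+1) :: (n+2) :: t))) ∪ _).card = _
        rw [Finset.card_union_of_disjoint hdC, Finset.card_union_of_disjoint hdAB]
        simp
      rw [e1, Finset.card_image_of_injective _ (List.cons_injective),
        Finset.card_image_of_injective _
          (fun a b h => by simpa using (List.cons_injective h)),
        ih (n+2) (by omega) (by omega), ih (n+1) (by omega) (by omega)]
      have f1 : 1 ≤ Nat.fib (n+3) := Nat.fib_pos.mpr (by omega)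
      have f2 : 1 ≤ Nat.fib (n+4) := Nat.fib_pos.mpr (by omega)
      have h5 : Nat.fib (n+5) = Nat.fib (n+3) + Nat.fib (n+4) := Nat.fib_add_two
      have h24 : Nat.fib (n+2+2) = Nat.fib (n+4) := by norm_num
      have h12 : Nat.fib (n+1+2) = Nat.fib (n+3) := by norm_num
      have h32 : Nat.fib (n+3+2) = Nat.fib (n+5) := by norm_num
      omega
lemma goodL_cons_max {a : ℕ} {t : List ℕ} (ha : ∀ x ∈ t, x < a) (h : GoodL t) :
    GoodL (a :: t) := by
  obtain ⟨h1, h2, h3⟩ := h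
  have hlt : ∀ m, m < t.length → gl (a :: t) (m+1) < a := by
    intro m hm
    rw [gl_cons_succ]
    exact ha _ (gl_mem t m hm)
  refine ⟨?_, ?_, ?_⟩
  · rintro ⟨i, j, k, hij, hjk, hk, hv1, hv2⟩
    simp only [List.length_cons] at hk
    obtain ⟨k', rfl⟩ : ∃ k', k = k'+1 := ⟨k-1, by omega⟩
    obtain ⟨j', rfl⟩ : ∃ j', j = j'+1 := ⟨j-1, by omega⟩
    rcases i with _ | i'
    · have := hlt j' (by omega); rw [gl_cons_zero] at hv1; omega
    · exact h1 ⟨i', j', k', by omega, by omega, by omega, hv1, hv2⟩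
  · rintro ⟨i, j, k, hij, hjk, hk, hv1, hv2⟩
    simp only [List.length_cons] at hk
    obtain ⟨k', rfl⟩ : ∃ k', k = k'+1 := ⟨k-1, by omega⟩
    obtain ⟨j', rfl⟩ : ∃ j', j = j'+1 := ⟨j-1, by omega⟩
    rcases i with _ | i'
    · have := hlt k' (by omega); rw [gl_cons_zero] at hv1; omega
    · exact h2 ⟨i', j', k', by omega, by omega, by omega, hv1, hv2⟩
  · rintro ⟨i, j, k, l, hij, hjk, hkl, hl, hv1, hv2, hv3⟩
    simp only [List.length_cons] at hl
    obtain ⟨l', rfl⟩ : ∃ l', l = l'+1 := ⟨l-1, by omega⟩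
    obtain ⟨k', rfl⟩ : ∃ k', k = k'+1 := ⟨k-1, by omega⟩
    obtain ⟨j', rfl⟩ : ∃ j', j = j'+1 := ⟨j-1, by omega⟩
    rcases i with _ | i'
    · have := hlt k' (by omega); rw [gl_cons_zero] at hv3; omega
    · exact h3 ⟨i', j', k', l', by omega, by omega, by omega, by omega, hv1, hv2, hv3⟩

lemma goodL_cons2 {b : ℕ} {t : List ℕ} (hb : ∀ x ∈ t, x < b) (h : GoodL t) :
    GoodL (b :: (b+1) :: t) := by
  obtain ⟨h1, h2, h3⟩ := h
  have hlt : ∀ m, m < t.length → gl (b :: (b+1) :: t) (m+2) < b := by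
    intro m hm
    show gl t m < b
    exact hb _ (gl_mem t m hm)
  have g0 : gl (b :: (b+1) :: t) 0 = b := rfl
  have g1 : gl (b :: (b+1) :: t) 1 = b+1 := rfl
  refine ⟨?_, ?_, ?_⟩
  · rintro ⟨i, j, k, hij, hjk, hk, hv1, hv2⟩
    simp only [List.length_cons] at hk
    obtain ⟨k', rfl⟩ : ∃ k', k = k'+2 := ⟨k-2, by omega⟩
    rcases Nat.lt_or_ge j 2 with hj2 | hj2
    · -- j = 1, i = 0
      have hj : j = 1 := by omega
      have hi : i = 0 := by omega
      subst hj; subst hi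
      have := hlt k' (by omega); omega
    · obtain ⟨j', rfl⟩ : ∃ j', j = j'+2 := ⟨j-2, by omega⟩
      rcases Nat.lt_or_ge i 2 with hi2 | hi2
      · have hjlt := hlt j' (by omega)
        rcases Nat.lt_or_ge i 1 with hi1 | hi1
        · have : i = 0 := by omega
          subst this; omega
        · have : i = 1 := by omega
          subst this; omega
      · obtain ⟨i', rfl⟩ : ∃ i', i = i'+2 := ⟨i-2, by omega⟩
        exact h1 ⟨i', j', k', by omega, by omega, by omega, hv1, hv2⟩
  · rintro ⟨i, j, k, hij, hjk, hk, hv1, hv2⟩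
    simp only [List.length_cons] at hk
    obtain ⟨k', rfl⟩ : ∃ k', k = k'+2 := ⟨k-2, by omega⟩
    have hklt := hlt k' (by omega)
    rcases Nat.lt_or_ge i 2 with hi2 | hi2
    · rcases Nat.lt_or_ge i 1 with hi1 | hi1
      · have : i = 0 := by omega
        subst this; omega
      · have : i = 1 := by omega
        subst this; omega
    · obtain ⟨i', rfl⟩ : ∃ i', i = i'+2 := ⟨i-2, by omega⟩
      obtain ⟨j', rfl⟩ : ∃ j', j = j'+2 := ⟨j-2, by omega⟩
      exact h2 ⟨i', j', k', by omega, by omega, by omega, hv1, hv2⟩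
  · rintro ⟨i, j, k, l, hij, hjk, hkl, hl, hv1, hv2, hv3⟩
    simp only [List.length_cons] at hl
    obtain ⟨k', rfl⟩ : ∃ k', k = k'+2 := ⟨k-2, by omega⟩
    have hklt := hlt k' (by omega)
    rcases Nat.lt_or_ge i 2 with hi2 | hi2
    · rcases Nat.lt_or_ge i 1 with hi1 | hi1
      · have : i = 0 := by omega
        subst this; omega
      · have : i = 1 := by omega
        subst this; omega
    · obtain ⟨i', rfl⟩ : ∃ i', i = i'+2 := ⟨i-2, by omega⟩
      obtain ⟨j', rfl⟩ : ∃ j', j = j'+2 := ⟨j-2, by omega⟩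
      obtain ⟨l', rfl⟩ : ∃ l', l = l'+2 := ⟨l-2, by omega⟩
      exact h3 ⟨i', j', k', l', by omega, by omega, by omega, by omega, hv1, hv2, hv3⟩

/-- A list that is strictly decreasing except possibly at the last position avoids all
three patterns. -/
lemma goodL_of_desc {s : List ℕ}
    (hd : ∀ i j, i < j → j + 1 < s.length → gl s j < gl s i) : GoodL s := by
  refine ⟨?_, ?_, ?_⟩
  · rintro ⟨i, j, k, hij, hjk, hk, hv1, hv2⟩
    have := hd i j hij (by omega); omega
  · rintro ⟨i, j, k, hij, hjk, hk, hv1, hv2⟩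
    have := hd i j hij (by omega); omega
  · rintro ⟨i, j, k, l, hij, hjk, hkl, hl, hv1, hv2, hv3⟩
    have := hd i k (by omega) (by omega); omega

lemma goodL_special (m : ℕ) : GoodL (descList m 0 ++ [m+1]) := by
  apply goodL_of_desc
  intro i j hij hj1
  have hlen : (descList m 0 ++ [m+1]).length = m + 2 := by
    simp [descList_length]
  rw [hlen] at hj1
  rw [gl_append _ _ i (by rw [descList_length]; omega),
    gl_append _ _ j (by rw [descList_length]; omega),
    descList_getD _ _ (by omega), descList_getD _ _ (by omega)]
  omega

lemma avl_good : ∀ n, ∀ s ∈ AvL n, GoodL s := by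
  intro n
  induction n using Nat.strong_induction_on with
  | _ n ih =>
    match n with
    | 0 => simp [AvL]
    | 1 =>
      intro s hs
      simp only [AvL, Finset.mem_singleton] at hs
      subst hs
      exact goodL_of_desc (by intro i j _ hj; simp at hj)
    | (n+2) =>
      intro s hs
      simp only [AvL, Finset.mem_union, Finset.mem_image, Finset.mem_singleton] at hs
      rcases hs with (⟨t, ht, rfl⟩ | ⟨t, ht, rfl⟩) | rfl
      · exact goodL_cons_max (fun x hx => avl_lt _ t ht x hx) (ih (n+1) (by omega) t ht)
      · exact goodL_cons2 (fun x hx => avl_lt _ t ht x hx) (ih n (by omega) t ht)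
      · exact goodL_special n
lemma gl_eq_getElem (s : List ℕ) (i : ℕ) (h : i < s.length) : gl s i = s[i] :=
  List.getD_eq_getElem _ _ h

lemma goodL_tail {a : ℕ} {t : List ℕ} (h : GoodL (a :: t)) : GoodL t := by
  obtain ⟨h1, h2, h3⟩ := h
  refine ⟨?_, ?_, ?_⟩
  · rintro ⟨i, j, k, hij, hjk, hk, hv1, hv2⟩
    exact h1 ⟨i+1, j+1, k+1, by omega, by omega, by simp; omega, hv1, hv2⟩
  · rintro ⟨i, j, k, hij, hjk, hk, hv1, hv2⟩
    exact h2 ⟨i+1, j+1, k+1, by omega, by omega, by simp; omega, hv1, hv2⟩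
  · rintro ⟨i, j, k, l, hij, hjk, hkl, hl, hv1, hv2, hv3⟩
    exact h3 ⟨i+1, j+1, k+1, l+1, by omega, by omega, by omega, by simp; omega, hv1, hv2, hv3⟩

/-- A strictly decreasing list that is a permutation of `range m` is `descList (m-1) 0`. -/
lemma desc_perm_eq (m : ℕ) (w : List ℕ) (hp : w.Perm (List.range m))
    (hd : ∀ i j, i < j → j < w.length → gl w j < gl w i) : w = (List.range m).reverse := by
  refine List.Perm.eq_of_pairwise (le := (· > ·)) (fun a b _ _ h1 h2 => by omega) ?_ ?_ (hp.trans (List.reverse_perm _).symm)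
  · rw [List.pairwise_iff_getElem]
    intro i j hi hj hij
    have := hd i j hij hj
    rwa [gl_eq_getElem _ _ hi, gl_eq_getElem _ _ hj] at this
  · rw [List.pairwise_iff_getElem]
    intro i j hi hj hij
    simp only [List.getElem_reverse, List.getElem_range, List.length_range]
    simp only [List.length_reverse, List.length_range] at hi hj
    omega

/-- extract a position from membership -/
lemma mem_pos {s : List ℕ} {v : ℕ} (h : v ∈ s) : ∃ i, i < s.length ∧ gl s i = v := by
  obtain ⟨i, hi, he⟩ := List.mem_iff_getElem.mp h
  exact ⟨i, hi, by rw [gl_eq_getElem _ _ hi]; exact he⟩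

lemma nodup_gl_inj {s : List ℕ} (h : s.Nodup) {i j : ℕ} (hi : i < s.length)
    (hj : j < s.length) (he : gl s i = gl s j) : i = j := by
  rw [gl_eq_getElem _ _ hi, gl_eq_getElem _ _ hj] at he
  exact (List.Nodup.getElem_inj_iff h).mp he
lemma goodL_complete : ∀ n, 1 ≤ n → ∀ s, s.Perm (List.range n) → GoodL s → s ∈ AvL n := by
  intro n
  induction n using Nat.strong_induction_on with
  | _ n ih =>
    match n with
    | 0 => exact fun h => absurd h (by omega)
    | 1 =>
      intro _ s hp _
      have hr : List.range 1 = [0] := rfl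
      rw [hr] at hp
      have : s = [0] := List.perm_singleton.mp hp
      simp [AvL, this]
    | 2 =>
      intro _ s hp _
      have hr : List.range 2 = [0, 1] := rfl
      rw [hr] at hp
      have hlen : s.length = 2 := by simpa using hp.length_eq
      have hnd : s.Nodup := hp.nodup_iff.mpr (by decide)
      rcases s with _ | ⟨a, _ | ⟨b, _ | ⟨c, u⟩⟩⟩ <;> simp at hlen
      have ha : a = 0 ∨ a = 1 := by
        have : a ∈ [0, 1] := hp.mem_iff.mp (by simp)
        simpa using this
      have hb : b = 0 ∨ b = 1 := by
        have : b ∈ [0, 1] := hp.mem_iff.mp (by simp)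
        simpa using this
      have hab : a ≠ b := by simp at hnd; tauto
      rcases ha with rfl | rfl
      · have : b = 1 := by omega
        subst this; decide
      · have : b = 0 := by omega
        subst this; decide
    | (n+3) =>
      intro _ s hp hg
      have hlen : s.length = n+3 := by simpa using hp.length_eq
      have hnd : s.Nodup := hp.nodup_iff.mpr (List.nodup_range)
      have hmem : ∀ v, v ∈ s ↔ v < n+3 := by
        intro v; rw [hp.mem_iff, List.mem_range]
      have keyr : ∀ m : ℕ, (List.range (m+1)).Perm (m :: List.range m) := by
        intro m; rw [List.range_succ]; exact List.perm_append_singleton _ _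
      rcases s with _ | ⟨a, t⟩
      · simp at hlen
      have htl : t.length = n+2 := by simpa using hlen
      have hat : a ∉ t := by simp at hnd; tauto
      have htnd : t.Nodup := by simp at hnd; tauto
      obtain ⟨h1, h2, h3⟩ := hg
      rw [List.length_cons, htl] at h1 h2 h3
      -- values in t
      have htv : ∀ i, i < n+2 → gl t i < n+3 ∧ gl t i ≠ a := by
        intro i hi
        have hm : gl t i ∈ t := gl_mem t i (by omega)
        constructor
        · exact (hmem _).mp (List.mem_cons_of_mem _ hm)
        · intro h; rw [h] at hm; exact hat hm
      -- Step 1 : n+1 ≤ a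
      have ha1 : n+1 ≤ a := by
        by_contra hcon
        push_neg at hcon
        have hm1 : (n+1) ∈ t := by
          have := (hmem (n+1)).mpr (by omega)
          rcases List.mem_cons.mp this with h | h
          · omega
          · exact h
        have hm2 : (n+2) ∈ t := by
          have := (hmem (n+2)).mpr (by omega)
          rcases List.mem_cons.mp this with h | h
          · omega
          · exact h
        obtain ⟨p, hpl, hpv⟩ := mem_pos hm1
        obtain ⟨q, hql, hqv⟩ := mem_pos hm2
        have hpq : p ≠ q := by intro h; rw [h, hqv] at hpv; omega
        rw [htl] at hpl hql
        rcases Nat.lt_or_ge p q with h | h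
        · exact h1 ⟨0, p+1, q+1, by omega, by omega, by omega,
            by rw [gl_cons_zero, gl_cons_succ, hpv]; omega,
            by rw [gl_cons_succ, gl_cons_succ, hpv, hqv]; omega⟩
        · exact h2 ⟨0, q+1, p+1, by omega, by omega, by omega,
            by rw [gl_cons_zero, gl_cons_succ, hpv]; omega,
            by rw [gl_cons_succ, gl_cons_succ, hpv, hqv]; omega⟩
      have ha2 : a < n+3 := (hmem a).mp (List.mem_cons_self)
      rcases (by omega : a = n+2 ∨ a = n+1) with rfl | rfl
      · -- head is the maximum
        have hpt : t.Perm (List.range (n+2)) := by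
          have : ((n+2) :: t).Perm ((n+2) :: List.range (n+2)) :=
            hp.trans (keyr (n+2))
          exact this.cons_inv
        have hlen3 : ((n+2) :: t).length = n+2+1 := by simp [htl]
        have hgood : GoodL ((n+2) :: t) := by
          refine ⟨?_, ?_, ?_⟩ <;> rw [hlen3]
          exacts [h1, h2, h3]
        have ht : t ∈ AvL (n+2) :=
          ih (n+2) (by omega) (by omega) t hpt (goodL_tail hgood)
        show _ ∈ AvL (n+3)
        simp only [AvL, Finset.mem_union]
        exact Or.inl (Or.inl (Finset.mem_image_of_mem _ ht))
      · -- head is n+1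
        have hm2 : (n+2) ∈ t := by
          have := (hmem (n+2)).mpr (by omega)
          rcases List.mem_cons.mp this with h | h
          · omega
          · exact h
        obtain ⟨k, hkl, hkv⟩ := mem_pos hm2
        rw [htl] at hkl
        rcases Nat.eq_zero_or_pos k with rfl | hk1
        · -- second element is n+2
          rcases t with _ | ⟨b, u⟩
          · simp at htl
          have hb : b = n+2 := by simpa [gl] using hkv
          subst hb
          have hul : u.length = n+1 := by simpa using htl
          have hpu : u.Perm (List.range (n+1)) := by
            have c1 : ((n+1) :: (n+2) :: u).Perm ((n+2) :: (n+1) :: u) :=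
              List.Perm.swap (n+2) (n+1) u
          -- range (n+3) ~ (n+2) :: (n+1) :: range (n+1)
            have c2 : (List.range (n+3)).Perm ((n+2) :: (n+1) :: List.range (n+1)) :=
              (keyr (n+2)).trans ((keyr (n+1)).cons (n+2))
            have := (c1.symm.trans hp).trans c2
            exact (this.cons_inv).cons_inv
          have hlen3 : ((n+1) :: (n+2) :: u).length = n+2+1 := by
            simp [hul]
          have hgood : GoodL ((n+1) :: (n+2) :: u) := by
            refine ⟨?_, ?_, ?_⟩ <;> rw [hlen3]
            exacts [h1, h2, h3]
          have hu : u ∈ AvL (n+1) :=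
            ih (n+1) (by omega) (by omega) u hpu (goodL_tail (goodL_tail hgood))
          show _ ∈ AvL (n+3)
          simp only [AvL, Finset.mem_union]
          exact Or.inl (Or.inr (Finset.mem_image_of_mem _ hu))
        · -- n+2 occurs later in t : the special permutation
          have hb0 : gl t 0 ≤ n := by
            have h0 := htv 0 (by omega)
            have : gl t 0 ≠ n+2 := by
              intro h
              exact (by omega : (0:ℕ) ≠ k) (nodup_gl_inj htnd (by omega) (by omega) (by rw [h, hkv]))
            omega
          -- k is the last position of t
          have hk2 : k = n+1 := by
            by_contra hcon
            have hkn : k ≤ n := by omega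
            have hc3 : gl t (k+1) ≤ n := by
              have hc := htv (k+1) (by omega)
              have : gl t (k+1) ≠ n+2 := by
                intro h
                exact (by omega : k+1 ≠ k) (nodup_gl_inj htnd (by omega) (by omega) (by rw [h, hkv]))
              omega
            have hcb : gl t (k+1) ≠ gl t 0 :=
              fun h => (by omega : k+1 ≠ 0) (nodup_gl_inj htnd (by omega) (by omega) h)
            rcases Nat.lt_or_ge (gl t 0) (gl t (k+1)) with h | h
            · exact h2 ⟨1, k+1, k+2, by omega, by omega, by omega,
                by rw [gl_cons_succ, gl_cons_succ]; exact h,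
                by rw [gl_cons_succ, gl_cons_succ, hkv]; omega⟩
            · exact h3 ⟨0, 1, k+1, k+2, by omega, by omega, by omega, by omega,
                by rw [gl_cons_succ, gl_cons_succ]; omega,
                by rw [gl_cons_zero, gl_cons_succ]; omega,
                by rw [gl_cons_zero, gl_cons_succ, hkv]; omega⟩
          subst hk2
          -- middle values are ≤ n
          have hmid : ∀ j, 1 ≤ j → j ≤ n+1 → gl ((n+1) :: t) j ≤ n := by
            intro j hj1 hj2
            obtain ⟨j', rfl⟩ : ∃ j', j = j'+1 := ⟨j-1, by omega⟩
            rw [gl_cons_succ]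
            have hc := htv j' (by omega)
            have : gl t j' ≠ n+2 := by
              intro h
              exact (by omega : j' ≠ n+1) (nodup_gl_inj htnd (by omega) (by omega) (by rw [h, hkv]))
            omega
          -- strictly decreasing on the first n+2 entries
          have hdec : ∀ i j, i < j → j ≤ n+1 → gl ((n+1) :: t) j < gl ((n+1) :: t) i := by
            intro i j hij hj2
            rcases Nat.eq_zero_or_pos i with rfl | hi1
            · rw [gl_cons_zero]
              have := hmid j (by omega) hj2
              omega
            · by_contra hcon
              push_neg at hcon
              have hne : gl ((n+1) :: t) i ≠ gl ((n+1) :: t) j := by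
                intro h
                obtain ⟨i', rfl⟩ : ∃ i', i = i'+1 := ⟨i-1, by omega⟩
                obtain ⟨j', rfl⟩ : ∃ j', j = j'+1 := ⟨j-1, by omega⟩
                rw [gl_cons_succ, gl_cons_succ] at h
                exact (by omega : i'+1 ≠ j'+1)
                  (congrArg (·+1) (nodup_gl_inj htnd (by omega) (by omega) h))
              exact h1 ⟨i, j, n+2, hij, by omega, by omega, by omega,
                by rw [show (n+2) = (n+1)+1 from rfl, gl_cons_succ, hkv]
                   have := hmid j (by omega) hj2; omega⟩
          -- conclude s is the special permutation
          have hne : ((n+1) :: t) ≠ [] := by simp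
          have hlast : ((n+1) :: t).getLast hne = n+2 := by
            have hg2 : gl ((n+1) :: t) (n+2) = n+2 := by
              rw [show (n+2) = (n+1)+1 from rfl, gl_cons_succ]; exact hkv
            have hidx : ((n+1) :: t).length - 1 = n + 2 := by simp [htl]
            rw [List.getLast_eq_getElem,
              ← gl_eq_getElem _ _ (by rw [List.length_cons, htl]; omega), hidx]
            exact hg2
          have hsplit : ((n+1) :: t).dropLast ++ [n+2] = (n+1) :: t := by
            rw [← hlast]; exact List.dropLast_append_getLast hne
          set w := ((n+1) :: t).dropLast with hw
          have hwl : w.length = n+2 := by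
            rw [hw, List.length_dropLast, List.length_cons, htl]; omega
          have hglw : ∀ i, i < n+2 → gl w i = gl ((n+1) :: t) i := by
            intro i hi
            have hwi : i < w.length := by omega
            have hsi : i < ((n+1) :: t).length := by rw [List.length_cons, htl]; omega
            rw [gl_eq_getElem _ _ hwi, gl_eq_getElem _ _ hsi]
            exact List.getElem_dropLast _
          have hwp : w.Perm (List.range (n+2)) := by
            have c1 : (w ++ [n+2]).Perm (List.range (n+2) ++ [n+2]) := by
              rw [hsplit, ← List.range_succ]
              exact hp
            have c2 := ((List.perm_append_singleton (n+2) w).symm.trans c1).trans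
              (List.perm_append_singleton (n+2) (List.range (n+2)))
            exact c2.cons_inv
          have hweq : w = (List.range (n+2)).reverse := by
            apply desc_perm_eq (n+2) w hwp
            intro i j hij hjl
            rw [hwl] at hjl
            rw [hglw i (by omega), hglw j (by omega)]
            exact hdec i j hij (by omega)
          have hfin : (n+1) :: t = descList (n+1) 0 ++ [n+2] := by
            rw [← hsplit, hweq, descList_zero]
          rw [hfin]
          show _ ∈ AvL (n+3)
          simp only [AvL, Finset.mem_union, Finset.mem_singleton]
          exact Or.inr trivial
def permList {n : ℕ} (σ : Equiv.Perm (Fin n)) : List ℕ := List.ofFn (fun i => (σ i : ℕ))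

lemma permList_length {n : ℕ} (σ : Equiv.Perm (Fin n)) : (permList σ).length = n := by
  simp [permList]

lemma permList_gl {n : ℕ} (σ : Equiv.Perm (Fin n)) (i : ℕ) (h : i < n) :
    gl (permList σ) i = (σ ⟨i, h⟩ : ℕ) := by
  rw [gl_eq_getElem _ _ (by rw [permList_length]; exact h)]
  simp [permList]

lemma permList_perm {n : ℕ} (σ : Equiv.Perm (Fin n)) :
    (permList σ).Perm (List.range n) := by
  apply List.perm_of_nodup_nodup_toFinset_eq
  · rw [permList, List.nodup_ofFn]
    exact fun i j h => σ.injective (Fin.val_injective h)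
  · exact List.nodup_range
  · ext v
    simp only [List.mem_toFinset, permList, List.mem_ofFn, List.mem_range, Set.mem_range]
    constructor
    · rintro ⟨i, rfl⟩; exact (σ i).isLt
    · intro hv; exact ⟨σ.symm ⟨v, hv⟩, by simp⟩

lemma strictMono_vec3 {α : Type*} [Preorder α] {x y z : α} (h1 : x < y) (h2 : y < z) :
    StrictMono (![x, y, z]) := by
  intro a b hab
  fin_cases a <;> fin_cases b <;>
    first
      | exact absurd hab (by decide)
      | simpa using h1
      | simpa using h2
      | simpa using h1.trans h2

lemma strictMono_vec4 {α : Type*} [Preorder α] {x y z w : α} (h1 : x < y) (h2 : y < z)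
    (h3 : z < w) : StrictMono (![x, y, z, w]) := by
  intro a b hab
  fin_cases a <;> fin_cases b <;>
    first
      | exact absurd hab (by decide)
      | simpa using h1
      | simpa using h2
      | simpa using h3
      | simpa using h1.trans h2
      | simpa using h2.trans h3
      | simpa using (h1.trans h2).trans h3

lemma bridge123 {n : ℕ} (σ : Equiv.Perm (Fin n)) :
    PermContains σ p123 ↔ Has123 (gl (permList σ)) n := by
  constructor
  · rintro ⟨f, hm, hiff⟩
    refine ⟨(f 0).val, (f 1).val, (f 2).val, hm (by decide), hm (by decide), (f 2).isLt,
      ?_, ?_⟩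
    · rw [permList_gl σ _ (f 0).isLt, permList_gl σ _ (f 1).isLt]
      exact (hiff 0 1).mp (by decide)
    · rw [permList_gl σ _ (f 1).isLt, permList_gl σ _ (f 2).isLt]
      exact (hiff 1 2).mp (by decide)
  · rintro ⟨i, j, k, hij, hjk, hk, hv1, hv2⟩
    have hi : i < n := by omega
    have hj : j < n := by omega
    rw [permList_gl σ i hi, permList_gl σ j hj] at hv1
    rw [permList_gl σ j hj, permList_gl σ k hk] at hv2
    refine ⟨![⟨i, hi⟩, ⟨j, hj⟩, ⟨k, hk⟩],
      strictMono_vec3 (Fin.mk_lt_mk.mpr hij) (Fin.mk_lt_mk.mpr hjk), ?_⟩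
    intro a b
    set x : Fin n := ⟨i, hi⟩
    set y : Fin n := ⟨j, hj⟩
    set z : Fin n := ⟨k, hk⟩
    have h1 : σ x < σ y := hv1
    have h2 : σ y < σ z := hv2
    have hxz := h1.trans h2
    have n1 : ¬ σ x < σ x := lt_irrefl _
    have n2 : ¬ σ y < σ y := lt_irrefl _
    have n3 : ¬ σ z < σ z := lt_irrefl _
    have n4 : ¬ σ y < σ x := fun h => lt_irrefl _ (h1.trans h)
    have n5 : ¬ σ z < σ y := fun h => lt_irrefl _ (h2.trans h)
    have n6 : ¬ σ z < σ x := fun h => lt_irrefl _ (hxz.trans h)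
    fin_cases a <;> fin_cases b <;>
      simp only [p123, Matrix.cons_val_zero, Matrix.cons_val_one, Matrix.head_cons,
        Matrix.cons_val_two, Matrix.tail_cons] <;>
      first
        | exact iff_of_true (by decide) h1
        | exact iff_of_true (by decide) h2
        | exact iff_of_true (by decide) hxz
        | exact iff_of_false (by decide) n1
        | exact iff_of_false (by decide) n2
        | exact iff_of_false (by decide) n3
        | exact iff_of_false (by decide) n4
        | exact iff_of_false (by decide) n5
        | exact iff_of_false (by decide) n6

lemma bridge132 {n : ℕ} (σ : Equiv.Perm (Fin n)) :
    PermContains σ p132 ↔ Has132 (gl (permList σ)) n := by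
  constructor
  · rintro ⟨f, hm, hiff⟩
    refine ⟨(f 0).val, (f 1).val, (f 2).val, hm (by decide), hm (by decide), (f 2).isLt,
      ?_, ?_⟩
    · rw [permList_gl σ _ (f 0).isLt, permList_gl σ _ (f 2).isLt]
      exact (hiff 0 2).mp (by decide)
    · rw [permList_gl σ _ (f 2).isLt, permList_gl σ _ (f 1).isLt]
      exact (hiff 2 1).mp (by decide)
  · rintro ⟨i, j, k, hij, hjk, hk, hv1, hv2⟩
    have hi : i < n := by omega
    have hj : j < n := by omega
    rw [permList_gl σ i hi, permList_gl σ k hk] at hv1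
    rw [permList_gl σ k hk, permList_gl σ j hj] at hv2
    refine ⟨![⟨i, hi⟩, ⟨j, hj⟩, ⟨k, hk⟩],
      strictMono_vec3 (Fin.mk_lt_mk.mpr hij) (Fin.mk_lt_mk.mpr hjk), ?_⟩
    intro a b
    set x : Fin n := ⟨i, hi⟩
    set y : Fin n := ⟨j, hj⟩
    set z : Fin n := ⟨k, hk⟩
    have h1 : σ x < σ z := hv1
    have h2 : σ z < σ y := hv2
    have hxy := h1.trans h2
    have n1 : ¬ σ x < σ x := lt_irrefl _
    have n2 : ¬ σ y < σ y := lt_irrefl _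
    have n3 : ¬ σ z < σ z := lt_irrefl _
    have n4 : ¬ σ z < σ x := fun h => lt_irrefl _ (h1.trans h)
    have n5 : ¬ σ y < σ z := fun h => lt_irrefl _ (h2.trans h)
    have n6 : ¬ σ y < σ x := fun h => lt_irrefl _ (hxy.trans h)
    fin_cases a <;> fin_cases b <;>
      simp only [p132, Matrix.cons_val_zero, Matrix.cons_val_one, Matrix.head_cons,
        Matrix.cons_val_two, Matrix.tail_cons] <;>
      first
        | exact iff_of_true (by decide) h1
        | exact iff_of_true (by decide) h2
        | exact iff_of_true (by decide) hxy
        | exact iff_of_false (by decide) n1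
        | exact iff_of_false (by decide) n2
        | exact iff_of_false (by decide) n3
        | exact iff_of_false (by decide) n4
        | exact iff_of_false (by decide) n5
        | exact iff_of_false (by decide) n6

lemma bridge3241 {n : ℕ} (σ : Equiv.Perm (Fin n)) :
    PermContains σ (![2, 1, 3, 0] : Fin 4 → Fin 4) ↔ Has3241 (gl (permList σ)) n := by
  constructor
  · rintro ⟨f, hm, hiff⟩
    refine ⟨(f 0).val, (f 1).val, (f 2).val, (f 3).val, hm (by decide), hm (by decide),
      hm (by decide), (f 3).isLt, ?_, ?_, ?_⟩
    · rw [permList_gl σ _ (f 3).isLt, permList_gl σ _ (f 1).isLt]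
      exact (hiff 3 1).mp (by decide)
    · rw [permList_gl σ _ (f 1).isLt, permList_gl σ _ (f 0).isLt]
      exact (hiff 1 0).mp (by decide)
    · rw [permList_gl σ _ (f 0).isLt, permList_gl σ _ (f 2).isLt]
      exact (hiff 0 2).mp (by decide)
  · rintro ⟨i, j, k, l, hij, hjk, hkl, hl, hv1, hv2, hv3⟩
    have hi : i < n := by omega
    have hj : j < n := by omega
    have hk : k < n := by omega
    rw [permList_gl σ l hl, permList_gl σ j hj] at hv1
    rw [permList_gl σ j hj, permList_gl σ i hi] at hv2
    rw [permList_gl σ i hi, permList_gl σ k hk] at hv3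
    refine ⟨![⟨i, hi⟩, ⟨j, hj⟩, ⟨k, hk⟩, ⟨l, hl⟩],
      strictMono_vec4 (Fin.mk_lt_mk.mpr hij) (Fin.mk_lt_mk.mpr hjk) (Fin.mk_lt_mk.mpr hkl), ?_⟩
    intro a b
    set x : Fin n := ⟨i, hi⟩
    set y : Fin n := ⟨j, hj⟩
    set z : Fin n := ⟨k, hk⟩
    set w : Fin n := ⟨l, hl⟩
    have h1 : σ w < σ y := hv1
    have h2 : σ y < σ x := hv2
    have h3 : σ x < σ z := hv3
    have hwx := h1.trans h2
    have hwz := hwx.trans h3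
    have hyz := h2.trans h3
    have n1 : ¬ σ x < σ x := lt_irrefl _
    have n2 : ¬ σ y < σ y := lt_irrefl _
    have n3 : ¬ σ z < σ z := lt_irrefl _
    have n0 : ¬ σ w < σ w := lt_irrefl _
    have n4 : ¬ σ y < σ w := fun h => lt_irrefl _ (h1.trans h)
    have n5 : ¬ σ x < σ y := fun h => lt_irrefl _ (h2.trans h)
    have n6 : ¬ σ z < σ x := fun h => lt_irrefl _ (h3.trans h)
    have n7 : ¬ σ x < σ w := fun h => lt_irrefl _ (hwx.trans h)
    have n8 : ¬ σ z < σ w := fun h => lt_irrefl _ (hwz.trans h)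
    have n9 : ¬ σ z < σ y := fun h => lt_irrefl _ (hyz.trans h)
    fin_cases a <;> fin_cases b <;>
      simp only [Matrix.cons_val_zero, Matrix.cons_val_one, Matrix.head_cons,
        Matrix.cons_val_two, Matrix.tail_cons, Matrix.cons_val_three] <;>
      first
        | exact iff_of_true (by decide) h1
        | exact iff_of_true (by decide) h2
        | exact iff_of_true (by decide) h3
        | exact iff_of_true (by decide) hwx
        | exact iff_of_true (by decide) hwz
        | exact iff_of_true (by decide) hyz
        | exact iff_of_false (by decide) n0
        | exact iff_of_false (by decide) n1
        | exact iff_of_false (by decide) n2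
        | exact iff_of_false (by decide) n3
        | exact iff_of_false (by decide) n4
        | exact iff_of_false (by decide) n5
        | exact iff_of_false (by decide) n6
        | exact iff_of_false (by decide) n7
        | exact iff_of_false (by decide) n8
        | exact iff_of_false (by decide) n9

lemma avoid_iff_good {n : ℕ} (σ : Equiv.Perm (Fin n)) :
    (PermAvoids σ p123 ∧ PermAvoids σ p132 ∧
      PermAvoids σ (![2, 1, 3, 0] : Fin 4 → Fin 4)) ↔ GoodL (permList σ) := by
  rw [PermAvoids, PermAvoids, PermAvoids, bridge123, bridge132, bridge3241, GoodL,
    permList_length]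
lemma exists_perm_of_mem {n : ℕ} {s : List ℕ} (hp : s.Perm (List.range n)) :
    ∃ σ : Equiv.Perm (Fin n), permList σ = s := by
  have hlen : s.length = n := by simpa using hp.length_eq
  have hnd : s.Nodup := hp.nodup_iff.mpr (List.nodup_range)
  have hb : ∀ i : Fin n, gl s i.val < n := by
    intro i
    have := hp.mem_iff.mp (gl_mem s i.val (by omega))
    simpa using this
  have hinj : Function.Injective (fun i : Fin n => (⟨gl s i.val, hb i⟩ : Fin n)) := by
    intro i j h
    exact Fin.val_injective
      (nodup_gl_inj hnd (by omega : i.val < s.length) (by omega) (congrArg Fin.val h))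
  refine ⟨Equiv.ofBijective _ (Finite.injective_iff_bijective.mp hinj), ?_⟩
  apply List.ext_getElem (by simp [permList_length, hlen])
  intro i h1 h2
  have hin : i < n := by rwa [permList_length] at h1
  rw [← gl_eq_getElem _ _ h1, ← gl_eq_getElem _ _ h2, permList_gl _ i hin]
  rfl

theorem stmt2 :
    ∀ n, 1 ≤ n → Nat.card {σ : Equiv.Perm (Fin n) //
      PermAvoids σ p123 ∧ PermAvoids σ p132 ∧ PermAvoids σ (![2, 1, 3, 0] : Fin 4 → Fin 4)}
      = Nat.fib (n + 2) - 1 := by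
  intro n hn
  rw [← avl_card n hn]
  have e : {σ : Equiv.Perm (Fin n) //
      PermAvoids σ p123 ∧ PermAvoids σ p132 ∧
        PermAvoids σ (![2, 1, 3, 0] : Fin 4 → Fin 4)} ≃ {s // s ∈ AvL n} := by
    refine Equiv.ofBijective (fun σ => ⟨permList σ.1,
      goodL_complete n hn _ (permList_perm σ.1) ((avoid_iff_good σ.1).mp σ.2)⟩) ⟨?_, ?_⟩
    · intro σ τ h
      have h' : permList σ.1 = permList τ.1 := congrArg Subtype.val h
      apply Subtype.ext
      apply Equiv.ext
      intro i
      apply Fin.val_injective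
      have hgl : gl (permList σ.1) i.val = gl (permList τ.1) i.val := by rw [h']
      rw [permList_gl σ.1 i.val i.isLt, permList_gl τ.1 i.val i.isLt] at hgl
      simpa using hgl
    · rintro ⟨s, hs⟩
      obtain ⟨σ, hσ⟩ := exists_perm_of_mem (avl_perm n s hs)
      refine ⟨⟨σ, (avoid_iff_good σ).mpr ?_⟩, Subtype.ext hσ⟩
      rw [hσ]
      exact avl_good n s hs
  rw [Nat.card_congr e, Nat.card_eq_fintype_card, Fintype.card_coe]
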